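/- For every natural number ℓ, every finite collection of points x₁,…,xₙ ∈ S², and all complex numbers c₁,…,cₙ, the double sum ∑_{i=1}^{n} ∑_{j=1}^{n} c_i · conj(c_j) · P_ℓ(x_i · x_j) is a nonnegative real number. (Positive semidefiniteness of each Legendre polynomial evaluated at dot products of unit vectors, the basis for Class 1 isotropic reproducing kernels.) -/

import Mathlib

open MeasureTheory Metric Finset
open scoped ComplexOrder

/-- The `ℓ`-th Legendre polynomial (Rodrigues' formula), normalized so that `P_ℓ(1) = 1`. -/
noncomputable def legendreP (ℓ : ℕ) : Polynomial ℝ :=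
  ((1 : ℝ) / (2 ^ ℓ * ℓ.factorial)) • Polynomial.derivative^[ℓ] ((Polynomial.X ^ 2 - 1) ^ ℓ)

/-- The dot product of two points of the unit sphere `S² ⊂ ℝ³`. -/
noncomputable def sphereDot (x y : sphere (0 : EuclideanSpace ℝ (Fin 3)) 1) : ℝ :=
  inner ℝ (x : EuclideanSpace ℝ (Fin 3)) (y : EuclideanSpace ℝ (Fin 3))

open Polynomial Complex
set_option maxHeartbeats 1600000

noncomputable section
namespace LegPD
local notation "conj'" => starRingEnd ℂ

def lin (α β : ℂ) : ℂ[X] := C α * X + C β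

def pair (N : ℕ) (f g : ℂ[X]) : ℂ :=
  ∑ m ∈ range (N+1), ((m.factorial * (N - m).factorial : ℕ) : ℂ) * f.coeff m * g.coeff m

def Dop (α β : ℂ) (T : ℕ) (g : ℂ[X]) : ℂ[X] :=
  C α * derivative g + C β * (C (T : ℂ) * g - X * derivative g)


lemma pair_lin_mul (N : ℕ) (α β : ℂ) (f g : ℂ[X]) (hf : f.coeff (N+1) = 0) :
    pair (N+1) (lin α β * f) g = pair N f (Dop α β (N+1) g) := by
  have hexp : lin α β * f = C α * (X * f) + C β * f := by rw [lin]; ring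
  rw [hexp]
  unfold pair Dop
  calc ∑ m ∈ range (N+1+1), ((m.factorial * (N+1-m).factorial : ℕ) : ℂ)
        * (C α * (X * f) + C β * f).coeff m * g.coeff m
      = (∑ m ∈ range (N+1+1), α * (((m.factorial * (N+1-m).factorial : ℕ) : ℂ) * (X*f).coeff m * g.coeff m))
        + ∑ m ∈ range (N+1+1), β * (((m.factorial * (N+1-m).factorial : ℕ) : ℂ) * f.coeff m * g.coeff m) := by
        rw [← Finset.sum_add_distrib]
        refine Finset.sum_congr rfl fun m _ => ?_
        simp only [coeff_add, coeff_C_mul]; ring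
    _ = (∑ m ∈ range (N+1), α * ((((m+1).factorial * (N-m).factorial : ℕ) : ℂ) * f.coeff m * g.coeff (m+1)))
        + ∑ m ∈ range (N+1), β * (((m.factorial * (N+1-m).factorial : ℕ) : ℂ) * f.coeff m * g.coeff m) := by
        congr 1
        · rw [Finset.sum_range_succ']
          simp only [coeff_X_mul, mul_coeff_zero, coeff_X_zero, zero_mul, mul_zero, add_zero]
          refine Finset.sum_congr rfl fun m _ => ?_
          rw [show N+1-(m+1) = N-m from by omega]
        · rw [Finset.sum_range_succ, hf]
          simp
    _ = ∑ m ∈ range (N+1), ((m.factorial * (N-m).factorial : ℕ) : ℂ) * f.coeff m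
          * (C α * derivative g + C β * (C ((N+1 : ℕ) : ℂ) * g - X * derivative g)).coeff m := by
        rw [← Finset.sum_add_distrib]
        refine Finset.sum_congr rfl fun m hm => ?_
        have hm' : m ≤ N := by simpa using Nat.lt_succ_iff.mp (Finset.mem_range.mp hm)
        have hXd : (X * derivative g).coeff m = (m : ℂ) * g.coeff m := by
          cases m with
          | zero => simp
          | succ k =>
            rw [coeff_X_mul, coeff_derivative]; push_cast; ring
        simp only [coeff_add, coeff_C_mul, coeff_sub, hXd, coeff_derivative]
        have e1 : ((m+1).factorial * (N-m).factorial : ℕ) = (m.factorial * (N-m).factorial) * (m+1) := by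
          rw [Nat.factorial_succ]; ring
        have e2 : (m.factorial * (N+1-m).factorial : ℕ) = (m.factorial * (N-m).factorial) * ((N-m)+1) := by
          rw [show N+1-m = (N-m)+1 by omega, Nat.factorial_succ]; ring
        have hc : ((N+1:ℕ):ℂ) = ((N-m:ℕ):ℂ) + (m:ℂ) + 1 := by
          rw [show ((N+1:ℕ):ℂ) = ((((N-m)+m+1 : ℕ)):ℂ) from by rw [show (N-m)+m+1 = N+1 from by omega]]
          push_cast; ring
        rw [e1, e2, hc]
        push_cast
        ring

lemma derivative_lin_pow (γ δ : ℂ) (a : ℕ) :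
    derivative (lin γ δ ^ a) = C ((a:ℂ) * γ) * lin γ δ ^ (a-1) := by
  rw [derivative_pow, lin]
  simp [C_mul]
  ring

lemma Dop_pow_mul_pow (α β γ δ γ' δ' : ℂ) (r s : ℕ) :
    Dop α β (r+s) (lin γ δ ^ r * lin γ' δ' ^ s) =
      C ((r:ℂ) * (α*γ + β*δ)) * (lin γ δ ^ (r-1) * lin γ' δ' ^ s)
      + C ((s:ℂ) * (α*γ' + β*δ')) * (lin γ δ ^ r * lin γ' δ' ^ (s-1)) := by
  rw [Dop, derivative_mul, derivative_lin_pow, derivative_lin_pow]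
  cases r with
  | zero =>
    cases s with
    | zero => simp
    | succ s' =>
      simp only [Nat.cast_zero, zero_mul, map_zero, zero_add, pow_zero, one_mul, mul_one,
        Nat.add_sub_cancel, Nat.succ_sub_one, zero_mul, map_mul]
      simp only [lin]
      push_cast
      simp only [C_mul, C_add, C_1, map_natCast]
      ring_nf
  | succ r' =>
    cases s with
    | zero =>
      simp only [Nat.cast_zero, zero_mul, map_zero, zero_add, add_zero, pow_zero, one_mul, mul_one,
        Nat.add_sub_cancel, Nat.succ_sub_one, mul_zero]
      simp only [lin]
      push_cast
      simp only [C_mul, C_add, C_1, map_natCast]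
      ring_nf
    | succ s' =>
      simp only [Nat.succ_sub_one]
      simp only [lin]
      push_cast
      simp only [C_mul, C_add, C_1, map_natCast]
      rw [pow_succ (C γ * X + C δ) r', pow_succ (C γ' * X + C δ') s']
      ring

lemma pair_C_mul_add_right (N : ℕ) (f g h : ℂ[X]) (a b : ℂ) :
    pair N f (C a * g + C b * h) = a * pair N f g + b * pair N f h := by
  simp [pair, mul_add, Finset.sum_add_distrib, Finset.mul_sum]
  congr 1 <;> exact Finset.sum_congr rfl fun m _ => by ring

lemma coeff_pow_mul_pow_top (α β α' β' : ℂ) (p q M : ℕ) (h : p + q < M) :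
    (lin α β ^ p * lin α' β' ^ q).coeff M = 0 := by
  apply coeff_eq_zero_of_natDegree_lt
  calc (lin α β ^ p * lin α' β' ^ q).natDegree
      ≤ (lin α β ^ p).natDegree + (lin α' β' ^ q).natDegree := natDegree_mul_le
    _ ≤ p * (lin α β).natDegree + q * (lin α' β').natDegree := by
        exact add_le_add (natDegree_pow_le) (natDegree_pow_le)
    _ ≤ p * 1 + q * 1 := by
        exact add_le_add (Nat.mul_le_mul_left _ (natDegree_linear_le))
          (Nat.mul_le_mul_left _ (natDegree_linear_le))
    _ < M := by omega

lemma pair_base (q : ℕ) : ∀ (r s : ℕ), r + s = q → ∀ α' β' γ δ γ' δ' : ℂ,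
    pair q (lin α' β' ^ q) (lin γ δ ^ r * lin γ' δ' ^ s) =
      (q.factorial : ℂ) * (α'*γ + β'*δ)^r * (α'*γ' + β'*δ')^s := by
  induction q with
  | zero =>
    intro r s hrs α' β' γ δ γ' δ'
    obtain ⟨rfl, rfl⟩ : r = 0 ∧ s = 0 := by omega
    simp [pair]
  | succ q ih =>
    intro r s hrs α' β' γ δ γ' δ'
    have hdeg : (lin α' β' ^ q).coeff (q+1) = 0 := by
      apply coeff_eq_zero_of_natDegree_lt
      calc (lin α' β' ^ q).natDegree ≤ q * (lin α' β').natDegree := natDegree_pow_le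
        _ ≤ q * 1 := Nat.mul_le_mul_left _ (natDegree_linear_le)
        _ < q + 1 := by omega
    rw [pow_succ' (lin α' β') q, pair_lin_mul q α' β' _ _ hdeg]
    have hD := Dop_pow_mul_pow α' β' γ δ γ' δ' r s
    rw [hrs] at hD
    rw [hD, pair_C_mul_add_right]
    rcases r with _ | r'
    · have hs : s = q + 1 := by omega
      subst hs
      simp only [Nat.cast_zero, zero_mul, zero_add, Nat.add_sub_cancel]
      rw [ih 0 q (by omega)]
      rw [show (q+1).factorial = (q+1) * q.factorial from Nat.factorial_succ q]
      push_cast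
      ring
    · rcases s with _ | s'
      · have hr : q = r' := by omega
        subst hr
        simp only [Nat.cast_zero, zero_mul, add_zero, mul_zero, Nat.add_sub_cancel]
        rw [ih q 0 (by omega)]
        rw [show (q+1).factorial = (q+1) * q.factorial from Nat.factorial_succ q]
        push_cast
        ring
      · have hq : q = r' + s' + 1 := by omega
        subst hq
        rw [show r' + 1 - 1 = r' from rfl, show s' + 1 - 1 = s' from rfl,
          ih r' (s'+1) (by omega), ih (r'+1) s' (by omega)]
        rw [show (r'+s'+1+1).factorial = (r'+s'+2) * (r'+s'+1).factorial from by
          rw [show r'+s'+1+1 = (r'+s'+1)+1 from rfl, Nat.factorial_succ]]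
        push_cast
        ring


lemma succ_choose_fact (r' k : ℕ) :
    (r'+1) * r'.choose k * k.factorial = (r'+1).choose (k+1) * (k+1).factorial := by
  have h := Nat.add_one_mul_choose_eq r' k
  calc (r'+1) * r'.choose k * k.factorial = (Nat.succ r' * r'.choose k) * k.factorial := by
        rw [Nat.succ_eq_add_one]
    _ = ((r'+1).choose (k+1) * (k+1)) * k.factorial := by rw [h]
    _ = (r'+1).choose (k+1) * (k+1).factorial := by rw [Nat.factorial_succ]; ring

-- pointwise coefficient identity (ℕ)
lemma coeff_nat_id (p q r' s' k : ℕ) (hk : k ≤ p) :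
    (p+1).choose (k+1) * ((r'+1).choose (k+1)) * (k+1).factorial * ((s'+1).descFactorial (p-k)) * q.factorial
    = (r'+1) * (p.choose k * r'.choose k * k.factorial * ((s'+1).descFactorial (p-k)) * q.factorial)
      + (s'+1) * (p.choose (k+1) * ((r'+1).choose (k+1)) * (k+1).factorial * (s'.descFactorial (p-(k+1))) * q.factorial) := by
  rcases Nat.lt_or_ge k p with hlt | hge
  · have h2 : (s'+1) * s'.descFactorial (p-(k+1)) = (s'+1).descFactorial (p-k) := by
      rw [show p - k = (p - (k+1)) + 1 from by omega, Nat.succ_descFactorial_succ]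
    rw [Nat.choose_succ_succ (p) (k)]
    calc (p.choose k + p.choose (k+1)) * ((r'+1).choose (k+1)) * (k+1).factorial * ((s'+1).descFactorial (p-k)) * q.factorial
        = ((r'+1).choose (k+1) * (k+1).factorial) * p.choose k * ((s'+1).descFactorial (p-k)) * q.factorial
          + p.choose (k+1) * ((r'+1).choose (k+1)) * (k+1).factorial * ((s'+1).descFactorial (p-k)) * q.factorial := by ring
      _ = _ := by rw [← succ_choose_fact, ← h2]; ring
  · have hkp : k = p := by omega
    subst hkp
    rw [Nat.choose_succ_self k]
    simp only [Nat.choose_succ_succ k k, Nat.choose_self, Nat.choose_succ_self, add_zero, mul_zero, zero_mul]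
    rw [one_mul, ← succ_choose_fact]
    ring

lemma step_point (p q r' s' k : ℕ) (hk : k ≤ p) (A B Cc D : ℂ) :
    (((p+1).choose (k+1) * (r'+1).choose (k+1) * (k+1).factorial
        * ((s'+1).descFactorial ((p+1)-(k+1))) * q.factorial : ℕ) : ℂ)
      * A^(k+1) * B^((p+1)-(k+1)) * Cc^((r'+1)-(k+1)) * D^((q+(k+1))-(r'+1))
    = (((r'+1 : ℕ) : ℂ) * A) *
        (((p.choose k * r'.choose k * k.factorial * ((s'+1).descFactorial (p-k)) * q.factorial : ℕ) : ℂ)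
          * A^k * B^(p-k) * Cc^(r'-k) * D^((q+k)-r'))
      + (((s'+1 : ℕ) : ℂ) * B) *
        (((p.choose (k+1) * (r'+1).choose (k+1) * (k+1).factorial * (s'.descFactorial (p-(k+1))) * q.factorial : ℕ) : ℂ)
          * A^(k+1) * B^(p-(k+1)) * Cc^((r'+1)-(k+1)) * D^((q+(k+1))-(r'+1))) := by
  have e1 : (p+1)-(k+1) = p-k := by omega
  have e2 : (r'+1)-(k+1) = r'-k := by omega
  have e3 : (q+(k+1))-(r'+1) = (q+k)-r' := by omega
  rw [e1, e2, e3]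
  rcases Nat.lt_or_ge k p with hlt | hge
  · have hBpow : B ^ (p-k) = B ^ (p-(k+1)) * B := by
      rw [← pow_succ, show p-(k+1)+1 = p-k from by omega]
    rw [hBpow, coeff_nat_id p q r' s' k hk]
    push_cast
    ring
  · have hkp : k = p := by omega
    subst hkp
    rw [coeff_nat_id k q r' s' k hk]
    push_cast [Nat.choose_succ_self]
    ring

lemma step_sum (p q r' s' : ℕ) (A B Cc D : ℂ) :
    (((r'+1 : ℕ) : ℂ) * A) * (∑ k ∈ range (p+1),
        ((p.choose k * r'.choose k * k.factorial * ((s'+1).descFactorial (p-k)) * q.factorial : ℕ) : ℂ)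
          * A^k * B^(p-k) * Cc^(r'-k) * D^((q+k)-r'))
    + (((s'+1 : ℕ) : ℂ) * B) * (∑ k ∈ range (p+1),
        ((p.choose k * (r'+1).choose k * k.factorial * (s'.descFactorial (p-k)) * q.factorial : ℕ) : ℂ)
          * A^k * B^(p-k) * Cc^((r'+1)-k) * D^((q+k)-(r'+1)))
    = ∑ k ∈ range ((p+1)+1),
        (((p+1).choose k * (r'+1).choose k * k.factorial * ((s'+1).descFactorial ((p+1)-k)) * q.factorial : ℕ) : ℂ)
          * A^k * B^((p+1)-k) * Cc^((r'+1)-k) * D^((q+k)-(r'+1)) := by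
  have h2 : (∑ k ∈ range (p+1),
        ((p.choose k * (r'+1).choose k * k.factorial * (s'.descFactorial (p-k)) * q.factorial : ℕ) : ℂ)
          * A^k * B^(p-k) * Cc^((r'+1)-k) * D^((q+k)-(r'+1)))
      = (∑ k ∈ range (p+1),
        ((p.choose (k+1) * (r'+1).choose (k+1) * (k+1).factorial * (s'.descFactorial (p-(k+1))) * q.factorial : ℕ) : ℂ)
          * A^(k+1) * B^(p-(k+1)) * Cc^((r'+1)-(k+1)) * D^((q+(k+1))-(r'+1)))
        + ((p.choose 0 * (r'+1).choose 0 * (0).factorial * (s'.descFactorial (p-0)) * q.factorial : ℕ) : ℂ)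
          * A^0 * B^(p-0) * Cc^((r'+1)-0) * D^((q+0)-(r'+1)) := by
    rw [Finset.sum_range_succ']
    rw [Finset.sum_range_succ (fun k =>
        ((p.choose (k+1) * (r'+1).choose (k+1) * (k+1).factorial * (s'.descFactorial (p-(k+1))) * q.factorial : ℕ) : ℂ)
          * A^(k+1) * B^(p-(k+1)) * Cc^((r'+1)-(k+1)) * D^((q+(k+1))-(r'+1))) p]
    simp [Nat.choose_succ_self]
  conv_rhs => rw [Finset.sum_range_succ']
  have h3 : (∑ k ∈ range (p+1),
        (((p+1).choose (k+1) * (r'+1).choose (k+1) * (k+1).factorial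
            * ((s'+1).descFactorial ((p+1)-(k+1))) * q.factorial : ℕ) : ℂ)
          * A^(k+1) * B^((p+1)-(k+1)) * Cc^((r'+1)-(k+1)) * D^((q+(k+1))-(r'+1)))
      = ∑ k ∈ range (p+1),
          ((((r'+1 : ℕ) : ℂ) * A) *
            (((p.choose k * r'.choose k * k.factorial * ((s'+1).descFactorial (p-k)) * q.factorial : ℕ) : ℂ)
              * A^k * B^(p-k) * Cc^(r'-k) * D^((q+k)-r'))
          + (((s'+1 : ℕ) : ℂ) * B) *
            (((p.choose (k+1) * (r'+1).choose (k+1) * (k+1).factorial * (s'.descFactorial (p-(k+1))) * q.factorial : ℕ) : ℂ)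
              * A^(k+1) * B^(p-(k+1)) * Cc^((r'+1)-(k+1)) * D^((q+(k+1))-(r'+1)))) :=
    Finset.sum_congr rfl fun k hk =>
      step_point p q r' s' k (Nat.lt_succ_iff.mp (Finset.mem_range.mp hk)) A B Cc D
  rw [h3, h2, Finset.sum_add_distrib, ← Finset.mul_sum, ← Finset.mul_sum]
  have h4 : ((s'+1).descFactorial ((p+1)-0) : ℕ) = (s'+1) * s'.descFactorial p := by
    rw [show (p+1)-0 = p+1 from rfl, Nat.succ_descFactorial_succ]
  rw [h4]
  simp only [Nat.sub_zero, Nat.add_zero, Nat.choose_zero_right, Nat.factorial_zero, pow_zero,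
    mul_one, one_mul]
  push_cast
  ring


theorem pair_main (p : ℕ) : ∀ (q r s : ℕ), r + s = p + q → ∀ (α β α' β' γ δ γ' δ' : ℂ),
    pair (p+q) (lin α β ^ p * lin α' β' ^ q) (lin γ δ ^ r * lin γ' δ' ^ s) =
      ∑ k ∈ range (p+1),
        ((p.choose k * r.choose k * k.factorial * (s.descFactorial (p - k)) * q.factorial : ℕ) : ℂ)
        * (α*γ + β*δ)^k * (α*γ' + β*δ')^(p-k) * (α'*γ + β'*δ)^(r-k) * (α'*γ' + β'*δ')^((q+k)-r) := by
  induction p with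
  | zero =>
    intro q r s hrs α β α' β' γ δ γ' δ'
    simp only [pow_zero, one_mul, zero_add, Finset.sum_range_one, Nat.choose_zero_right,
      Nat.descFactorial_zero, Nat.factorial_zero, Nat.sub_zero, Nat.zero_sub, Nat.add_zero]
    rw [pair_base q r s (by omega), show q - r = s from by omega]
    push_cast
    ring
  | succ p ih =>
    intro q r s hrs α β α' β' γ δ γ' δ'
    rw [show p+1+q = (p+q)+1 from by omega] at hrs ⊢
    have hdeg : (lin α β ^ p * lin α' β' ^ q).coeff ((p+q)+1) = 0 :=
      coeff_pow_mul_pow_top α β α' β' p q _ (by omega)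
    rw [pow_succ' (lin α β) p, mul_assoc, pair_lin_mul (p+q) α β _ _ hdeg]
    have hD := Dop_pow_mul_pow α β γ δ γ' δ' r s
    rw [hrs] at hD
    rw [hD, pair_C_mul_add_right]
    rcases r with _ | r'
    · -- r = 0
      have hs : s = p+q+1 := by omega
      subst hs
      simp only [Nat.cast_zero, zero_mul, zero_add, Nat.add_sub_cancel]
      rw [ih q 0 (p+q) (by omega)]
      have z1 : ∀ (n : ℕ) (f : ℕ → ℂ), (∀ k, f (k+1) = 0) → ∑ k ∈ range (n+1), f k = f 0 := by
        intro n f hf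
        rw [Finset.sum_range_succ']
        simp [hf]
      rw [z1 p _ (fun k => by simp [Nat.choose_zero_succ]),
        z1 (p+1) _ (fun k => by simp [Nat.choose_zero_succ])]
      simp only [Nat.sub_zero, Nat.add_zero, Nat.choose_zero_right, Nat.choose_self,
        Nat.factorial_zero, pow_zero, mul_one, one_mul, Nat.zero_sub]
      rw [show (p+q+1).descFactorial (p+1) = (p+q+1) * (p+q).descFactorial p from
        Nat.succ_descFactorial_succ (p+q) p]
      push_cast
      ring
    · rcases s with _ | s'
      · -- s = 0
        have hr : r' = p+q := by omega
        subst hr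
        simp only [Nat.cast_zero, zero_mul, mul_zero, add_zero, Nat.add_sub_cancel]
        rw [ih q (p+q) 0 (by omega)]
        have z2 : ∀ (n : ℕ) (f : ℕ → ℂ), (∀ k, k < n → f k = 0) → ∑ k ∈ range (n+1), f k = f n := by
          intro n f hf
          rw [Finset.sum_range_succ, Finset.sum_eq_zero (fun k hk => hf k (Finset.mem_range.mp hk))]
          simp
        rw [z2 p _ (fun k hk => by
          rw [show (0:ℕ).descFactorial (p - k) = 0 from by
            rw [show p - k = (p - k - 1) + 1 from by omega]
            exact Nat.zero_descFactorial_succ _]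
          simp),
          z2 (p+1) _ (fun k hk => by
          rw [show (0:ℕ).descFactorial (p + 1 - k) = 0 from by
            rw [show p + 1 - k = (p + 1 - k - 1) + 1 from by omega]
            exact Nat.zero_descFactorial_succ _]
          simp)]
        simp only [Nat.sub_self, Nat.descFactorial_zero, Nat.choose_self, mul_one, one_mul, pow_zero]
        rw [show p + q - p = q from by omega, show q + p - (p+q) = 0 from by omega,
          show p + q + 1 - (p+1) = q from by omega, show q + (p+1) - (p+q+1) = 0 from by omega]
        rw [show (p+q+1).choose (p+1) * (p+1).factorial * q.factorial
            = ((p+q+1) * (p+q).choose p * p.factorial) * q.factorial from by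
          rw [succ_choose_fact (p+q) p]]
        push_cast
        ring
      · -- main case
        have h1 : r' + (s'+1) = p + q := by omega
        have h2 : (r'+1) + s' = p + q := by omega
        simp only [Nat.add_sub_cancel]
        rw [ih q r' (s'+1) h1, ih q (r'+1) s' h2]
        exact step_sum p q r' s' (α*γ + β*δ) (α*γ' + β*δ') (α'*γ + β'*δ) (α'*γ' + β'*δ')

lemma coeff_nat_id2 (ℓ k : ℕ) (hk : k ≤ ℓ) :
    ℓ.choose k * (ℓ.descFactorial (ℓ-k) * ℓ.descFactorial k) = ℓ.choose k ^ 2 * ℓ.factorial := by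
  have h1 : (ℓ - (ℓ-k)).factorial * ℓ.descFactorial (ℓ-k) = ℓ.factorial :=
    Nat.factorial_mul_descFactorial (by omega)
  have h2 : (ℓ - k).factorial * ℓ.descFactorial k = ℓ.factorial :=
    Nat.factorial_mul_descFactorial hk
  have h3 : ℓ.choose k * k.factorial * (ℓ-k).factorial = ℓ.factorial :=
    Nat.choose_mul_factorial_mul_factorial hk
  have h4 : ℓ - (ℓ - k) = k := by omega
  rw [h4] at h1
  have key : (ℓ.choose k * (ℓ.descFactorial (ℓ-k) * ℓ.descFactorial k)) * (k.factorial * (ℓ-k).factorial)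
      = (ℓ.choose k ^ 2 * ℓ.factorial) * (k.factorial * (ℓ-k).factorial) := by
    calc (ℓ.choose k * (ℓ.descFactorial (ℓ-k) * ℓ.descFactorial k)) * (k.factorial * (ℓ-k).factorial)
        = ℓ.choose k * (k.factorial * ℓ.descFactorial (ℓ-k)) * ((ℓ-k).factorial * ℓ.descFactorial k) := by ring
      _ = ℓ.choose k * ℓ.factorial * ℓ.factorial := by rw [h1, h2]
      _ = (ℓ.choose k * k.factorial * (ℓ-k).factorial) * ℓ.choose k * ℓ.factorial := by rw [h3]; ring
      _ = (ℓ.choose k ^ 2 * ℓ.factorial) * (k.factorial * (ℓ-k).factorial) := by ring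
  have hpos : 0 < k.factorial * (ℓ-k).factorial :=
    Nat.mul_pos k.factorial_pos (ℓ-k).factorial_pos
  exact Nat.eq_of_mul_eq_mul_right hpos key

lemma legendre_eval (ℓ : ℕ) (t : ℝ) :
    (legendreP ℓ).eval t
      = ∑ k ∈ range (ℓ+1), (ℓ.choose k : ℝ)^2 * ((t-1)/2)^k * ((t+1)/2)^(ℓ-k) := by
  unfold legendreP
  have hfac : ((X : ℝ[X])^2 - 1)^ℓ = (X - Polynomial.C 1)^ℓ * (X + Polynomial.C 1)^ℓ := by
    rw [← mul_pow]; congr 1; simp; ring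
  rw [hfac, Polynomial.iterate_derivative_mul]
  rw [eval_smul, Polynomial.eval_finset_sum]
  rw [smul_eq_mul, Finset.mul_sum]
  refine Finset.sum_congr rfl fun k hk => ?_
  have hk' : k ≤ ℓ := Nat.lt_succ_iff.mp (Finset.mem_range.mp hk)
  rw [Polynomial.iterate_derivative_X_sub_pow, Polynomial.iterate_derivative_X_add_pow]
  rw [show ℓ - (ℓ - k) = k from by omega]
  simp only [eval_smul, eval_mul, eval_pow, eval_sub, eval_add, eval_X, eval_one, eval_C,
    smul_eq_mul, nsmul_eq_mul]
  rw [show ((t-1)/2)^k = (t-1)^k / 2^k from div_pow _ _ _,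
     show ((t+1)/2)^(ℓ-k) = (t+1)^(ℓ-k) / 2^(ℓ-k) from div_pow _ _ _]
  have h2 : (2:ℝ)^k * 2^(ℓ-k) = 2^ℓ := by
    rw [← pow_add, show k + (ℓ-k) = ℓ from by omega]
  have hc := coeff_nat_id2 ℓ k hk'
  have hcR : (ℓ.choose k : ℝ) * (ℓ.descFactorial (ℓ-k) * ℓ.descFactorial k)
      = (ℓ.choose k:ℝ)^2 * ℓ.factorial := by exact_mod_cast congrArg (Nat.cast (R := ℝ)) hc
  field_simp
  rw [← h2]
  simp only [eval_natCast]
  linear_combination ((t-1)^k * (t+1)^(ℓ-k) * (2^k * 2^(ℓ-k) : ℝ)) * hcR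

lemma sphere_coords (x : sphere (0 : EuclideanSpace ℝ (Fin 3)) 1) :
    ((x : EuclideanSpace ℝ (Fin 3)) 0)^2 + ((x : EuclideanSpace ℝ (Fin 3)) 1)^2
      + ((x : EuclideanSpace ℝ (Fin 3)) 2)^2 = 1 := by
  have hx : ‖(x : EuclideanSpace ℝ (Fin 3))‖ = 1 := mem_sphere_zero_iff_norm.mp x.2
  have h := EuclideanSpace.norm_eq (x : EuclideanSpace ℝ (Fin 3))
  rw [hx] at h
  have h2 : (∑ i : Fin 3, ‖(x : EuclideanSpace ℝ (Fin 3)) i‖^2) = 1 := by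
    have h3 := congrArg (·^2) h
    simp only [one_pow] at h3
    rw [Real.sq_sqrt (by positivity)] at h3
    exact h3.symm
  simp only [Real.norm_eq_abs, _root_.sq_abs, Fin.sum_univ_three] at h2
  linarith [h2]

lemma exists_spinor (x : sphere (0 : EuclideanSpace ℝ (Fin 3)) 1) :
    ∃ a b : ℂ, a * conj' a + b * conj' b = 1 ∧
      a * conj' a - b * conj' b = (((x : EuclideanSpace ℝ (Fin 3)) 2 : ℝ) : ℂ) ∧
      2 * (a * conj' b) = (((x : EuclideanSpace ℝ (Fin 3)) 0 : ℝ) : ℂ)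
        + Complex.I * (((x : EuclideanSpace ℝ (Fin 3)) 1 : ℝ) : ℂ) := by
  set v0 := ((x : EuclideanSpace ℝ (Fin 3)) 0 : ℝ)
  set v1 := ((x : EuclideanSpace ℝ (Fin 3)) 1 : ℝ)
  set v2 := ((x : EuclideanSpace ℝ (Fin 3)) 2 : ℝ)
  have hsum : v0^2 + v1^2 + v2^2 = 1 := sphere_coords x
  by_cases h2 : v2 = -1
  · refine ⟨0, 1, by simp, by simp [h2], ?_⟩
    have h0 : v0 = 0 := by nlinarith [sq_nonneg v0, sq_nonneg v1]
    have h1 : v1 = 0 := by nlinarith [sq_nonneg v0, sq_nonneg v1]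
    simp [h0, h1]
  · have hgt : -1 < v2 := by
      rcases lt_or_eq_of_le (show -1 ≤ v2 by nlinarith [sq_nonneg v0, sq_nonneg v1]) with h | h
      · exact h
      · exact absurd h.symm h2
    have hpos : (0:ℝ) < 1 + v2 := by linarith
    set u := Real.sqrt ((1 + v2)/2) with hu
    have hupos : 0 < u := Real.sqrt_pos.mpr (by linarith)
    have hu2 : u^2 = (1 + v2)/2 := Real.sq_sqrt (by linarith)
    have hune : ((u:ℂ)) ≠ 0 := by
      simpa using Complex.ofReal_ne_zero.mpr hupos.ne'
    have hcu : conj' ((u:ℂ)) = (u:ℂ) := Complex.conj_ofReal u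
    have hcb : conj' (((v0 : ℂ) - Complex.I * (v1:ℂ))/(2*(u:ℂ)))
        = ((v0 : ℂ) + Complex.I * (v1:ℂ))/(2*(u:ℂ)) := by
      rw [map_div₀]
      simp only [map_sub, map_mul, Complex.conj_ofReal, Complex.conj_I, map_ofNat]
      ring
    have haa : (u:ℂ) * (u:ℂ) = (1 + (v2:ℂ))/2 := by
      rw [← Complex.ofReal_mul, show u*u = (1+v2)/2 from by rw [← hu2]; ring]
      push_cast
      ring
    have hbb : (((v0 : ℂ) - Complex.I * (v1:ℂ))/(2*(u:ℂ)))
        * (((v0 : ℂ) + Complex.I * (v1:ℂ))/(2*(u:ℂ))) = (1 - (v2:ℂ))/2 := by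
      rw [div_mul_div_comm]
      have hnum : ((v0 : ℂ) - Complex.I * (v1:ℂ)) * ((v0 : ℂ) + Complex.I * (v1:ℂ))
          = (((v0^2 + v1^2) : ℝ) : ℂ) := by
        push_cast
        linear_combination (-(v1:ℂ)^2) * Complex.I_sq
      have hden : (2*(u:ℂ)) * (2*(u:ℂ)) = (((2*(1+v2)) : ℝ) : ℂ) := by
        push_cast
        linear_combination 4 * haa
      rw [hnum, hden, show v0^2 + v1^2 = (1-v2)*(1+v2) from by nlinarith]
      have hne2 : (1:ℂ) + (v2:ℂ) ≠ 0 := by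
        intro hc
        have : (1:ℝ) + v2 = 0 := by exact_mod_cast (by push_cast at hc ⊢; exact hc : ((1+v2 : ℝ):ℂ) = 0)
        linarith
      push_cast
      field_simp
    refine ⟨(u:ℂ), ((v0 : ℂ) - Complex.I * (v1:ℂ))/(2*(u:ℂ)), ?_, ?_, ?_⟩
    · rw [hcu, hcb, haa, hbb]
      ring
    · rw [hcu, hcb, haa, hbb]
      ring
    · rw [hcb]
      field_simp

lemma kernel_id (a b a2 b2 : ℂ) (v0 v1 v2 w0 w1 w2 : ℝ)
    (h1 : a * conj' a + b * conj' b = 1)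
    (h2 : a * conj' a - b * conj' b = (v2:ℂ))
    (h3 : 2 * (a * conj' b) = (v0:ℂ) + Complex.I * (v1:ℂ))
    (h1' : a2 * conj' a2 + b2 * conj' b2 = 1)
    (h2' : a2 * conj' a2 - b2 * conj' b2 = (w2:ℂ))
    (h3' : 2 * (a2 * conj' b2) = (w0:ℂ) + Complex.I * (w1:ℂ)) :
    2 * ((a * conj' a2 + b * conj' b2) * conj' (a * conj' a2 + b * conj' b2))
      = 1 + (((v0*w0 + v1*w1 + v2*w2 : ℝ)) : ℂ)
    ∧ 2 * ((a * b2 - b * a2) * conj' (a * b2 - b * a2))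
      = 1 - (((v0*w0 + v1*w1 + v2*w2 : ℝ)) : ℂ) := by
  have hc3 : 2 * (conj' a * b) = (v0:ℂ) - Complex.I * (v1:ℂ) := by
    have := congrArg conj' h3
    simpa [map_add, map_mul, Complex.conj_ofReal, Complex.conj_I, map_ofNat, sub_eq_add_neg] using this
  have hc3' : 2 * (conj' a2 * b2) = (w0:ℂ) - Complex.I * (w1:ℂ) := by
    have := congrArg conj' h3'
    simpa [map_add, map_mul, Complex.conj_ofReal, Complex.conj_I, map_ofNat, sub_eq_add_neg] using this
  have hv0 : (v0:ℂ) = a * conj' b + conj' a * b := by linear_combination -(h3 + hc3)/2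
  have hw0 : (w0:ℂ) = a2 * conj' b2 + conj' a2 * b2 := by linear_combination -(h3' + hc3')/2
  have hIv1 : Complex.I * (v1:ℂ) = a * conj' b - conj' a * b := by linear_combination -(h3 - hc3)/2
  have hIw1 : Complex.I * (w1:ℂ) = a2 * conj' b2 - conj' a2 * b2 := by linear_combination -(h3' - hc3')/2
  have hv1w1 : (v1:ℂ) * (w1:ℂ)
      = -((a * conj' b - conj' a * b) * (a2 * conj' b2 - conj' a2 * b2)) := by
    have hprod : (Complex.I * (v1:ℂ)) * (Complex.I * (w1:ℂ))
        = (a * conj' b - conj' a * b) * (a2 * conj' b2 - conj' a2 * b2) := by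
      rw [hIv1, hIw1]
    linear_combination -hprod + ((v1:ℂ) * (w1:ℂ)) * Complex.I_sq
  constructor
  · have hexp : conj' (a * conj' a2 + b * conj' b2) = conj' a * a2 + conj' b * b2 := by
      simp [map_add, map_mul]
    rw [hexp]
    push_cast
    rw [hv0, hw0, hv1w1, ← h2, ← h2']
    linear_combination (a2 * conj' a2 + b2 * conj' b2) * h1 + h1'
  · have hexp : conj' (a * b2 - b * a2) = conj' a * conj' b2 - conj' b * conj' a2 := by
      simp [map_sub, map_mul]
    rw [hexp]
    push_cast
    rw [hv0, hw0, hv1w1, ← h2, ← h2']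
    linear_combination (a2 * conj' a2 + b2 * conj' b2) * h1 + h1'

lemma pair_nonneg (N : ℕ) (f : ℂ[X]) : 0 ≤ pair N (f.map conj') f := by
  apply Finset.sum_nonneg
  intro m _
  rw [Polynomial.coeff_map]
  have h1 : conj' (f.coeff m) * f.coeff m = ((Complex.normSq (f.coeff m) : ℝ) : ℂ) := by
    rw [mul_comm, Complex.mul_conj]
  rw [mul_assoc, h1, show (((m.factorial * (N - m).factorial : ℕ) : ℂ))
      = (((m.factorial * (N - m).factorial : ℕ) : ℝ) : ℂ) from by push_cast; ring,
    ← Complex.ofReal_mul]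
  rw [Complex.zero_le_real]
  exact mul_nonneg (Nat.cast_nonneg _) (Complex.normSq_nonneg _)

lemma pair_sum_left {ι : Type*} (N : ℕ) (s : Finset ι) (F : ι → ℂ[X]) (g : ℂ[X]) :
    pair N (∑ i ∈ s, F i) g = ∑ i ∈ s, pair N (F i) g := by
  unfold pair
  rw [Finset.sum_comm]
  refine Finset.sum_congr rfl fun m _ => ?_
  rw [Polynomial.finset_sum_coeff, Finset.mul_sum, Finset.sum_mul]

lemma pair_sum_right {ι : Type*} (N : ℕ) (s : Finset ι) (f : ℂ[X]) (G : ι → ℂ[X]) :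
    pair N f (∑ i ∈ s, G i) = ∑ i ∈ s, pair N f (G i) := by
  unfold pair
  rw [Finset.sum_comm]
  refine Finset.sum_congr rfl fun m _ => ?_
  rw [Polynomial.finset_sum_coeff, Finset.mul_sum]

lemma pair_C_mul_left (N : ℕ) (x : ℂ) (f g : ℂ[X]) :
    pair N (C x * f) g = x * pair N f g := by
  unfold pair
  rw [Finset.mul_sum]
  refine Finset.sum_congr rfl fun m _ => by rw [Polynomial.coeff_C_mul]; ring

lemma pair_C_mul_right (N : ℕ) (x : ℂ) (f g : ℂ[X]) :
    pair N f (C x * g) = x * pair N f g := by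
  unfold pair
  rw [Finset.mul_sum]
  refine Finset.sum_congr rfl fun m _ => by rw [Polynomial.coeff_C_mul]; ring

lemma map_lin (α β : ℂ) : (lin α β).map conj' = lin (conj' α) (conj' β) := by
  simp [lin, Polynomial.map_add, Polynomial.map_mul, Polynomial.map_C, Polynomial.map_X]

lemma powers_combine (A B c : ℂ) (k e : ℕ) :
    c * (conj' A)^k * (-(conj' B))^e * B^e * A^k
      = c * (-(B * conj' B))^e * (A * conj' A)^k := by
  rw [show (-(B * conj' B)) = (-(conj' B)) * B from by ring,
    show A * conj' A = conj' A * A from mul_comm _ _, mul_pow, mul_pow]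
  ring

lemma sphereDot_eq (x y : sphere (0 : EuclideanSpace ℝ (Fin 3)) 1) :
    sphereDot x y = (x : EuclideanSpace ℝ (Fin 3)) 0 * (y : EuclideanSpace ℝ (Fin 3)) 0
      + (x : EuclideanSpace ℝ (Fin 3)) 1 * (y : EuclideanSpace ℝ (Fin 3)) 1
      + (x : EuclideanSpace ℝ (Fin 3)) 2 * (y : EuclideanSpace ℝ (Fin 3)) 2 := by
  simp [sphereDot, PiLp.inner_apply, RCLike.inner_apply, conj_trivial, Fin.sum_univ_three, mul_comm]


end LegPD
end

open LegPD in

theorem legendre_positive_definite (ℓ : ℕ) (n : ℕ)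
    (x : Fin n → sphere (0 : EuclideanSpace ℝ (Fin 3)) 1) (c : Fin n → ℂ) :
    0 ≤ ∑ i, ∑ j, c i * (starRingEnd ℂ) (c j) *
      (((legendreP ℓ).eval (sphereDot (x i) (x j)) : ℝ) : ℂ) := by
  classical
  choose a b hab1 hab2 hab3 using fun i => exists_spinor (x i)
  set h : Fin n → ℂ[X] :=
    fun i => lin (a i) (b i) ^ ℓ * lin (-((starRingEnd ℂ) (b i))) ((starRingEnd ℂ) (a i)) ^ ℓ with hh
  have hmap : ∀ i, (h i).map (starRingEnd ℂ)
      = lin ((starRingEnd ℂ) (a i)) ((starRingEnd ℂ) (b i)) ^ ℓ * lin (-(b i)) (a i) ^ ℓ := by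
    intro i
    rw [hh]
    simp only [Polynomial.map_mul, Polynomial.map_pow, map_lin, map_neg, Complex.conj_conj]
  have key : ∀ i j, pair (ℓ+ℓ) ((h i).map (starRingEnd ℂ)) (h j)
      = ((ℓ.factorial * ℓ.factorial : ℕ) : ℂ)
        * (((legendreP ℓ).eval (sphereDot (x i) (x j)) : ℝ) : ℂ) := by
    intro i j
    obtain ⟨hA, hB⟩ := kernel_id (a i) (b i) (a j) (b j) _ _ _ _ _ _
      (hab1 i) (hab2 i) (hab3 i) (hab1 j) (hab2 j) (hab3 j)
    rw [← sphereDot_eq (x i) (x j)] at hA hB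
    obtain ⟨A, hAdef⟩ : ∃ A', A' = a i * (starRingEnd ℂ) (a j) + b i * (starRingEnd ℂ) (b j) := ⟨_, rfl⟩
    obtain ⟨Bq, hBdef⟩ : ∃ B', B' = a i * b j - b i * a j := ⟨_, rfl⟩
    rw [← hAdef] at hA
    rw [← hBdef] at hB
    have hA2 : ((sphereDot (x i) (x j) : ℝ) : ℂ) + 1 = 2 * (A * (starRingEnd ℂ) A) := by
      linear_combination -hA
    have hB2 : ((sphereDot (x i) (x j) : ℝ) : ℂ) - 1 = -(2 * (Bq * (starRingEnd ℂ) Bq)) := by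
      linear_combination hB
    rw [hmap i, hh]
    rw [pair_main ℓ ℓ ℓ ℓ (by omega)]
    rw [legendre_eval]
    push_cast
    rw [Finset.mul_sum]
    conv_rhs => rw [← Finset.sum_range_reflect]
    refine Finset.sum_congr rfl fun k hk => ?_
    have hk' : k ≤ ℓ := Nat.lt_succ_iff.mp (Finset.mem_range.mp hk)
    rw [show ℓ + 1 - 1 - k = ℓ - k from by omega]
    rw [show ℓ - (ℓ - k) = k from by omega]
    rw [show (ℓ + k) - ℓ = k from by omega]
    rw [Nat.choose_symm hk']
    -- identify the four base combinations
    rw [show (starRingEnd ℂ) (a i) * (a j) + (starRingEnd ℂ) (b i) * (b j) = (starRingEnd ℂ) A from by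
        rw [hAdef]; simp only [map_add, map_mul, Complex.conj_conj]; try ring]
    rw [show (starRingEnd ℂ) (a i) * (-((starRingEnd ℂ) (b j))) + (starRingEnd ℂ) (b i) * (starRingEnd ℂ) (a j) = -((starRingEnd ℂ) Bq) from by
        rw [hBdef]; simp only [map_sub, map_mul]; try ring]
    rw [show (-(b i)) * (a j) + (a i) * (b j) = Bq from by rw [hBdef]; try ring]
    rw [show (-(b i)) * (-((starRingEnd ℂ) (b j))) + (a i) * (starRingEnd ℂ) (a j) = A from by rw [hAdef]; try ring]
    -- coefficient identity
    have hcoef : (ℓ.choose k * ℓ.choose k * k.factorial * ℓ.descFactorial (ℓ-k) * ℓ.factorial : ℕ)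
        = (ℓ.factorial * ℓ.factorial) * (ℓ.choose k * ℓ.choose k) := by
      have hd : k.factorial * ℓ.descFactorial (ℓ-k) = ℓ.factorial := by
        have h5 := Nat.factorial_mul_descFactorial (show ℓ - k ≤ ℓ by omega)
        rwa [show ℓ - (ℓ-k) = k from by omega] at h5
      calc ℓ.choose k * ℓ.choose k * k.factorial * ℓ.descFactorial (ℓ-k) * ℓ.factorial
          = (k.factorial * ℓ.descFactorial (ℓ-k)) * ℓ.factorial * (ℓ.choose k * ℓ.choose k) := by ring
        _ = _ := by rw [hd]
    rw [powers_combine A Bq _ k (ℓ - k)]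
    rw [show (-(Bq * (starRingEnd ℂ) Bq)) = (((sphereDot (x i) (x j) : ℝ) : ℂ) - 1)/2 from by
        linear_combination -hB2/2]
    rw [show (A * (starRingEnd ℂ) A) = (((sphereDot (x i) (x j) : ℝ) : ℂ) + 1)/2 from by
        linear_combination -hA2/2]
    have hcoefC := congrArg (Nat.cast (R := ℂ)) hcoef
    push_cast at hcoefC
    linear_combination ((((sphereDot (x i) (x j) : ℝ) : ℂ) - 1)/2)^(ℓ-k)
      * ((((sphereDot (x i) (x j) : ℝ) : ℂ) + 1)/2)^k * hcoefC
  -- Gram argument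
  set H : ℂ[X] := ∑ i, C ((starRingEnd ℂ) (c i)) * h i with hHdef
  have hHmap : H.map (starRingEnd ℂ) = ∑ i, C (c i) * ((h i).map (starRingEnd ℂ)) := by
    rw [hHdef, ← Polynomial.coe_mapRingHom, map_sum]
    refine Finset.sum_congr rfl fun i _ => ?_
    simp only [Polynomial.coe_mapRingHom, Polynomial.map_mul, Polynomial.map_C, Complex.conj_conj]
  have hbig : pair (ℓ+ℓ) (H.map (starRingEnd ℂ)) H
      = ∑ i, ∑ j, (c i) * (starRingEnd ℂ) (c j) * pair (ℓ+ℓ) ((h i).map (starRingEnd ℂ)) (h j) := by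
    rw [hHmap, hHdef, pair_sum_left]
    refine Finset.sum_congr rfl fun i _ => ?_
    rw [pair_C_mul_left, pair_sum_right, Finset.mul_sum]
    refine Finset.sum_congr rfl fun j _ => ?_
    rw [pair_C_mul_right]
    ring
  have hfin : pair (ℓ+ℓ) (H.map (starRingEnd ℂ)) H
      = ((ℓ.factorial * ℓ.factorial : ℕ) : ℂ)
        * ∑ i, ∑ j, c i * (starRingEnd ℂ) (c j) * (((legendreP ℓ).eval (sphereDot (x i) (x j)) : ℝ) : ℂ) := by
    rw [hbig, Finset.mul_sum]
    refine Finset.sum_congr rfl fun i _ => ?_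
    rw [Finset.mul_sum]
    refine Finset.sum_congr rfl fun j _ => ?_
    rw [key i j]
    ring
  have h0 : 0 ≤ pair (ℓ+ℓ) (H.map (starRingEnd ℂ)) H := pair_nonneg _ _
  have hKne : ((ℓ.factorial * ℓ.factorial : ℕ) : ℂ) ≠ 0 := by
    exact_mod_cast Nat.cast_ne_zero.mpr (Nat.mul_ne_zero ℓ.factorial_ne_zero ℓ.factorial_ne_zero)
  have hKinv : 0 ≤ (((ℓ.factorial * ℓ.factorial : ℕ) : ℂ))⁻¹ := by
    rw [show ((ℓ.factorial * ℓ.factorial : ℕ) : ℂ) = (((ℓ.factorial * ℓ.factorial : ℕ) : ℝ) : ℂ) from by norm_cast]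
    rw [← Complex.ofReal_inv, Complex.zero_le_real]
    positivity
  have hrw : ∑ i, ∑ j, c i * (starRingEnd ℂ) (c j) * (((legendreP ℓ).eval (sphereDot (x i) (x j)) : ℝ) : ℂ)
      = (((ℓ.factorial * ℓ.factorial : ℕ) : ℂ))⁻¹ * pair (ℓ+ℓ) (H.map (starRingEnd ℂ)) H := by
    rw [hfin, ← mul_assoc, inv_mul_cancel₀ hKne, one_mul]
  rw [hrw]
  exact mul_nonneg hKinv h0
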